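/- Fix an FU k and an opponent power vector p_{-k} with nonnegative entries. If the price satisfies λ_k·h_{k,0} ≥ W·G_k(p_{-k})/p_a, then u_k(p_k, p_{-k}) < 0 = u_k(0, p_{-k}) for every p_k ∈ (0, p_k^max]; in particular p_k = 0 is the unique maximizer of u_k(·, p_{-k}) on [0, p_k^max], i.e., a sufficiently highly priced FU is forced out of the game. -/

import Mathlib

open Real Finset

/-- SINR of FU `k`. -/
noncomputable def sinr {K : ℕ} (hff : Fin K → Fin K → ℝ) (h0f N : Fin K → ℝ)
    (p0 : ℝ) (k : Fin K) (p : Fin K → ℝ) : ℝ :=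
  hff k k * p k / (N k + h0f k * p0 + ∑ j ∈ Finset.univ.erase k, hff j k * p j)

/-- Net payoff of FU `k`. -/
noncomputable def payoff {K : ℕ} (W pa p0 : ℝ) (hff : Fin K → Fin K → ℝ)
    (h0f hf0 N lam : Fin K → ℝ) (k : Fin K) (p : Fin K → ℝ) : ℝ :=
  W * Real.log (1 + sinr hff h0f N p0 k p) / (p k + pa) - lam k * hf0 k * p k

/-- `G_k(p_{-k}) = h_{k,k}/(N_k + h_{0,k} p_0 + Σ_{j≠k} h_{j,k} p_j)`. -/
noncomputable def Gk {K : ℕ} (hff : Fin K → Fin K → ℝ) (h0f N : Fin K → ℝ)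
    (p0 : ℝ) (k : Fin K) (p : Fin K → ℝ) : ℝ :=
  hff k k / (N k + h0f k * p0 + ∑ j ∈ Finset.univ.erase k, hff j k * p j)

/-- If `λ_k·h_{k,0} ≥ W·G_k(p_{-k})/p_a` then `u_k(p_k, p_{-k}) < 0 = u_k(0, p_{-k})`
for every `p_k ∈ (0, p_k^max]`; in particular `p_k = 0` is the unique maximizer:
a sufficiently highly priced FU is forced out of the game. -/
theorem highPrice_forces_out {K : ℕ} (hK : 1 ≤ K)
    (W pa p0 : ℝ) (hW : 0 < W) (hpa : 0 < pa) (hp0 : 0 ≤ p0)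
    (hff : Fin K → Fin K → ℝ) (h0f hf0 N lam pmax : Fin K → ℝ)
    (hhff : ∀ i j, 0 < hff i j) (hh0f : ∀ i, 0 < h0f i) (hhf0 : ∀ i, 0 < hf0 i)
    (hN : ∀ i, 0 < N i) (hlam : ∀ i, 0 ≤ lam i) (hpmax : ∀ i, 0 < pmax i)
    (k : Fin K) (p : Fin K → ℝ) (hp : ∀ i, i ≠ k → 0 ≤ p i)
    (hprice : lam k * hf0 k ≥ W * Gk hff h0f N p0 k p / pa) :
    (∀ x ∈ Set.Ioc (0:ℝ) (pmax k),
      payoff W pa p0 hff h0f hf0 N lam k (Function.update p k x) < 0) ∧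
    payoff W pa p0 hff h0f hf0 N lam k (Function.update p k 0) = 0 ∧
    (∀ x ∈ Set.Icc (0:ℝ) (pmax k),
      (∀ y ∈ Set.Icc (0:ℝ) (pmax k),
        payoff W pa p0 hff h0f hf0 N lam k (Function.update p k y) ≤
          payoff W pa p0 hff h0f hf0 N lam k (Function.update p k x)) → x = 0) := by
  set D : ℝ := N k + h0f k * p0 + ∑ j ∈ Finset.univ.erase k, hff j k * p j with hDdef
  have hsum : 0 ≤ ∑ j ∈ Finset.univ.erase k, hff j k * p j := by
    apply Finset.sum_nonneg
    intro j hj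
    exact mul_nonneg (hhff j k).le (hp j (Finset.ne_of_mem_erase hj))
  have hD : 0 < D := by
    have := mul_nonneg (hh0f k).le hp0
    have := hN k
    positivity
  have hsumupd : ∀ x : ℝ,
      (∑ j ∈ Finset.univ.erase k, hff j k * Function.update p k x j)
        = ∑ j ∈ Finset.univ.erase k, hff j k * p j := by
    intro x
    apply Finset.sum_congr rfl
    intro j hj
    rw [Function.update_of_ne (Finset.ne_of_mem_erase hj)]
  have hsinr : ∀ x : ℝ, sinr hff h0f N p0 k (Function.update p k x)
      = hff k k * x / D := by
    intro x
    simp only [sinr, Function.update_self, hsumupd, ← hDdef]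
  have hpay : ∀ x : ℝ, payoff W pa p0 hff h0f hf0 N lam k (Function.update p k x)
      = W * Real.log (1 + hff k k * x / D) / (x + pa) - lam k * hf0 k * x := by
    intro x
    simp only [payoff, hsinr, Function.update_self]
  have hG : Gk hff h0f N p0 k p = hff k k / D := rfl
  have hzero : payoff W pa p0 hff h0f hf0 N lam k (Function.update p k 0) = 0 := by
    rw [hpay]; simp
  have hneg : ∀ x ∈ Set.Ioc (0:ℝ) (pmax k),
      payoff W pa p0 hff h0f hf0 N lam k (Function.update p k x) < 0 := by
    intro x hx
    obtain ⟨hx0, _⟩ := hx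
    rw [hpay]
    have hGx : 0 < hff k k * x / D := by
      have := hhff k k; positivity
    have hlog : Real.log (1 + hff k k * x / D) ≤ hff k k * x / D := by
      have h1 : 0 < 1 + hff k k * x / D := by linarith
      have := Real.log_le_sub_one_of_pos h1
      linarith
    have hxpa : 0 < x + pa := by linarith
    have step1 : W * Real.log (1 + hff k k * x / D) / (x + pa)
        ≤ W * (hff k k * x / D) / (x + pa) := by
      gcongr
    have step2 : W * (hff k k * x / D) / (x + pa) < W * (hff k k * x / D) / pa := by
      apply div_lt_div_of_pos_left (by positivity) hpa (by linarith)
    have step3 : W * (hff k k * x / D) / pa ≤ lam k * hf0 k * x := by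
      have : W * (hff k k * x / D) / pa = (W * (hff k k / D) / pa) * x := by ring
      rw [this]
      have := hprice
      rw [hG] at this
      nlinarith
    linarith
  refine ⟨hneg, hzero, ?_⟩
  intro x hx hmax
  by_contra hxne
  have hx0 : 0 < x := lt_of_le_of_ne hx.1 (Ne.symm hxne)
  have h1 := hneg x ⟨hx0, hx.2⟩
  have h2 := hmax 0 ⟨le_refl 0, (hpmax k).le⟩
  rw [hzero] at h2
  linarith
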